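/- For each fixed t ∈ [0,1], the Hashin–Shtrikman upper-bound function v ↦ f^HS(t;v) is nondecreasing on the interval [0,1]. -/

import Mathlib

open Real

/-- The square root `s = √(1 - t²)`. -/
noncomputable def sHS (t : ℝ) : ℝ := Real.sqrt (1 - t ^ 2)

/-- The Hashin–Shtrikman correction term `q(t; v)` for two well-ordered isotropic
plane-stress phases with bulk moduli `κm < κp` and shear moduli `μm < μp`. -/
noncomputable def qHS (κm κp μm μp t v : ℝ) : ℝ :=
  if v * (κp - κm) * t ≤ (κp + μp - (κp - κm) * v) * sHS t ∧
     v * (μp - μm) * sHS t ≤ (κp + μp - (μp - μm) * v) * t then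
    v * (1 - v) * ((κp - κm) * t - (μp - μm) * sHS t) ^ 2 /
      (κp + μp - ((κp - κm) + (μp - μm)) * v)
  else if (κp + μp - (κp - κm) * v) * sHS t < v * (κp - κm) * t then
    (1 - v) * (v * (κp - κm) ^ 2 * t ^ 2 / (κp + μp - (κp - κm) * v)
      - (μp - μm) * (sHS t) ^ 2)
  else
    (1 - v) * (v * (μp - μm) ^ 2 * (sHS t) ^ 2 / (κp + μp - (μp - μm) * v)
      - (κp - κm) * t ^ 2)

/-- The Hashin–Shtrikman upper-bound function `f^HS(t; v)`:
the Voigt energy minus the correction `q(t; v)`. -/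
noncomputable def fHS (κm κp μm μp t v : ℝ) : ℝ :=
  (κm + v * (κp - κm)) * t ^ 2 + (μm + v * (μp - μm)) * (1 - t ^ 2)
    - qHS κm κp μm μp t v

/- ---------- auxiliary lemmas ---------- -/

lemma fHS_eq1 (κm κp μm μp t w : ℝ)
    (h : w * (κp - κm) * t ≤ (κp + μp - (κp - κm) * w) * sHS t ∧
         w * (μp - μm) * sHS t ≤ (κp + μp - (μp - μm) * w) * t) :
    fHS κm κp μm μp t w =
      (κm + w * (κp - κm)) * t ^ 2 + (μm + w * (μp - μm)) * (1 - t ^ 2)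
        - w * (1 - w) * ((κp - κm) * t - (μp - μm) * sHS t) ^ 2 /
            (κp + μp - ((κp - κm) + (μp - μm)) * w) := by
  unfold fHS qHS
  rw [if_pos h]

lemma fHS_eq2 (κm κp μm μp t w : ℝ)
    (h : (κp + μp - (κp - κm) * w) * sHS t < w * (κp - κm) * t) :
    fHS κm κp μm μp t w =
      (κm + w * (κp - κm)) * t ^ 2 + (μm + w * (μp - μm)) * (1 - t ^ 2)
        - (1 - w) * (w * (κp - κm) ^ 2 * t ^ 2 / (κp + μp - (κp - κm) * w)
            - (μp - μm) * (sHS t) ^ 2) := by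
  unfold fHS qHS
  rw [if_neg (fun hc => not_lt.mpr hc.1 h), if_pos h]

lemma fHS_eq3 (κm κp μm μp t w : ℝ)
    (h1 : ¬ ((κp + μp - (κp - κm) * w) * sHS t < w * (κp - κm) * t))
    (h3 : ¬ (w * (μp - μm) * sHS t ≤ (κp + μp - (μp - μm) * w) * t)) :
    fHS κm κp μm μp t w =
      (κm + w * (κp - κm)) * t ^ 2 + (μm + w * (μp - μm)) * (1 - t ^ 2)
        - (1 - w) * (w * (μp - μm) ^ 2 * (sHS t) ^ 2 / (κp + μp - (μp - μm) * w)
            - (κp - κm) * t ^ 2) := by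
  unfold fHS qHS
  rw [if_neg (fun hc => h3 hc.2), if_neg h1]

lemma hs_bracket (a b S t s u v : ℝ) (ha : 0 < a) (hb : 0 < b) (hS : a + b < S)
    (ht : 0 ≤ t) (hs : 0 ≤ s) (hts : t ^ 2 + s ^ 2 = 1)
    (hu0 : 0 ≤ u) (huv : u ≤ v) (hv1 : v ≤ 1) :
    (a * t - b * s) ^ 2 * (S * (1 - u - v) + (a + b) * u * v)
      ≤ (a * t ^ 2 + b * s ^ 2) * (S - (a + b) * u) * (S - (a + b) * v) := by
  have hv0 : 0 ≤ v := hu0.trans huv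
  have hu1 : u ≤ 1 := huv.trans hv1
  have h1u : 0 ≤ 1 - u := by linarith
  have h1v : 0 ≤ 1 - v := by linarith
  have hS0 : 0 < S := by linarith
  have hq : 0 ≤ a * t ^ 2 + b * s ^ 2 := by positivity
  have hdu : 0 < S - (a + b) * u := by nlinarith
  have hdv : 0 < S - (a + b) * v := by nlinarith
  have hc : (a * t - b * s) ^ 2 ≤ (a + b) * (a * t ^ 2 + b * s ^ 2) := by
    nlinarith [mul_pos ha hb, sq_nonneg (t + s)]
  have hSu : S * (1 - u) ≤ S - (a + b) * u := by nlinarith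
  have hSv : S * (1 - v) ≤ S - (a + b) * v := by nlinarith
  have hP : S * (1 - u - v) + (a + b) * u * v ≤ S * (1 - u) * (1 - v) := by
    nlinarith [mul_nonneg hu0 hv0]
  by_cases hcase : 0 ≤ S * (1 - u - v) + (a + b) * u * v
  · have hA : S * (1 - u) * (S * (1 - v)) ≤ (S - (a + b) * u) * (S - (a + b) * v) :=
      mul_le_mul hSu hSv (by positivity) hdu.le
    have hB : (a + b) * (S * (1 - u) * (1 - v)) ≤ S * (1 - u) * (S * (1 - v)) := by
      nlinarith [mul_nonneg (mul_nonneg h1u h1v) hS0.le]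
    calc (a * t - b * s) ^ 2 * (S * (1 - u - v) + (a + b) * u * v)
        ≤ (a * t - b * s) ^ 2 * (S * (1 - u) * (1 - v)) :=
          mul_le_mul_of_nonneg_left hP (sq_nonneg _)
      _ ≤ ((a + b) * (a * t ^ 2 + b * s ^ 2)) * (S * (1 - u) * (1 - v)) :=
          mul_le_mul_of_nonneg_right hc (by positivity)
      _ ≤ (a * t ^ 2 + b * s ^ 2) * (S - (a + b) * u) * (S - (a + b) * v) := by
          nlinarith [mul_le_mul_of_nonneg_left (hB.trans hA) hq]
  · have hL : (a * t - b * s) ^ 2 * (S * (1 - u - v) + (a + b) * u * v) ≤ 0 :=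
      mul_nonpos_of_nonneg_of_nonpos (sq_nonneg _) (le_of_not_ge hcase)
    have hR : 0 ≤ (a * t ^ 2 + b * s ^ 2) * (S - (a + b) * u) * (S - (a + b) * v) := by
      positivity
    linarith

set_option maxHeartbeats 2000000 in
lemma hs_mono1 (κm κp μm μp t s u v : ℝ)
    (hκm : 0 < κm) (hκ : κm < κp) (hμm : 0 < μm) (hμ : μm < μp)
    (ht0 : 0 ≤ t) (hs0 : 0 ≤ s) (hts : t ^ 2 + s ^ 2 = 1)
    (hu0 : 0 ≤ u) (huv : u ≤ v) (hv1 : v ≤ 1) :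
    (κm + u * (κp - κm)) * t ^ 2 + (μm + u * (μp - μm)) * (1 - t ^ 2)
      - u * (1 - u) * ((κp - κm) * t - (μp - μm) * s) ^ 2 /
          (κp + μp - ((κp - κm) + (μp - μm)) * u)
    ≤ (κm + v * (κp - κm)) * t ^ 2 + (μm + v * (μp - μm)) * (1 - t ^ 2)
      - v * (1 - v) * ((κp - κm) * t - (μp - μm) * s) ^ 2 /
          (κp + μp - ((κp - κm) + (μp - μm)) * v) := by
  have hv0 : 0 ≤ v := hu0.trans huv
  have hu1 : u ≤ 1 := huv.trans hv1
  have h1t : 1 - t ^ 2 = s ^ 2 := by linarith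
  have hdu : 0 < κp + μp - ((κp - κm) + (μp - μm)) * u := by nlinarith
  have hdv : 0 < κp + μp - ((κp - κm) + (μp - μm)) * v := by nlinarith
  have hbr := hs_bracket (κp - κm) (μp - μm) (κp + μp) t s u v (by linarith) (by linarith)
    (by linarith) ht0 hs0 hts hu0 huv hv1
  rw [h1t, ← sub_nonneg]
  have key : ((κm + v * (κp - κm)) * t ^ 2 + (μm + v * (μp - μm)) * s ^ 2
      - v * (1 - v) * ((κp - κm) * t - (μp - μm) * s) ^ 2 /
          (κp + μp - ((κp - κm) + (μp - μm)) * v))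
    - ((κm + u * (κp - κm)) * t ^ 2 + (μm + u * (μp - μm)) * s ^ 2
      - u * (1 - u) * ((κp - κm) * t - (μp - μm) * s) ^ 2 /
          (κp + μp - ((κp - κm) + (μp - μm)) * u))
    = (v - u) * (((κp - κm) * t ^ 2 + (μp - μm) * s ^ 2)
            * (κp + μp - ((κp - κm) + (μp - μm)) * u)
            * (κp + μp - ((κp - κm) + (μp - μm)) * v)
        - ((κp - κm) * t - (μp - μm) * s) ^ 2
            * ((κp + μp) * (1 - u - v) + ((κp - κm) + (μp - μm)) * u * v))
      / ((κp + μp - ((κp - κm) + (μp - μm)) * u)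
          * (κp + μp - ((κp - κm) + (μp - μm)) * v)) := by
    set A := κp + μp - ((κp - κm) + (μp - μm)) * u with hA
    set B := κp + μp - ((κp - κm) + (μp - μm)) * v with hB
    field_simp [hdu.ne', hdv.ne']
    rw [hA, hB]
    ring
  rw [key]
  apply div_nonneg _ (mul_pos hdu hdv).le
  apply mul_nonneg (by linarith)
  nlinarith [hbr]

set_option maxHeartbeats 1000000 in
lemma hs_mono2 (κm κp μm μp t s u v : ℝ)
    (hκm : 0 < κm) (hκ : κm < κp) (hμm : 0 < μm) (hμ : μm < μp)
    (hts : t ^ 2 + s ^ 2 = 1)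
    (hu0 : 0 ≤ u) (huv : u ≤ v) (hv1 : v ≤ 1) :
    (κm + u * (κp - κm)) * t ^ 2 + (μm + u * (μp - μm)) * (1 - t ^ 2)
      - (1 - u) * (u * (κp - κm) ^ 2 * t ^ 2 / (κp + μp - (κp - κm) * u)
          - (μp - μm) * s ^ 2)
    ≤ (κm + v * (κp - κm)) * t ^ 2 + (μm + v * (μp - μm)) * (1 - t ^ 2)
      - (1 - v) * (v * (κp - κm) ^ 2 * t ^ 2 / (κp + μp - (κp - κm) * v)
          - (μp - μm) * s ^ 2) := by
  have hv0 : 0 ≤ v := hu0.trans huv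
  have hu1 : u ≤ 1 := huv.trans hv1
  have h1t : 1 - t ^ 2 = s ^ 2 := by linarith
  have hdu : 0 < κp + μp - (κp - κm) * u := by nlinarith
  have hdv : 0 < κp + μp - (κp - κm) * v := by nlinarith
  rw [h1t, ← sub_nonneg]
  have key : ((κm + v * (κp - κm)) * t ^ 2 + (μm + v * (μp - μm)) * s ^ 2
      - (1 - v) * (v * (κp - κm) ^ 2 * t ^ 2 / (κp + μp - (κp - κm) * v)
          - (μp - μm) * s ^ 2))
    - ((κm + u * (κp - κm)) * t ^ 2 + (μm + u * (μp - μm)) * s ^ 2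
      - (1 - u) * (u * (κp - κm) ^ 2 * t ^ 2 / (κp + μp - (κp - κm) * u)
          - (μp - μm) * s ^ 2))
    = (v - u) * (κp - κm) * (κp + μp) * (κm + μp) * t ^ 2
        / ((κp + μp - (κp - κm) * u) * (κp + μp - (κp - κm) * v)) := by
    set A := κp + μp - (κp - κm) * u with hA
    set B := κp + μp - (κp - κm) * v with hB
    field_simp [hdu.ne', hdv.ne']
    rw [hA, hB]
    ring
  rw [key]
  apply div_nonneg _ (mul_pos hdu hdv).le
  have h1 : 0 ≤ (v - u) * (κp - κm) * (κp + μp) * (κm + μp) := by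
    have : 0 ≤ v - u := sub_nonneg.mpr huv
    have h2 : 0 ≤ (v - u) * (κp - κm) := mul_nonneg this (by linarith)
    have h3 : 0 ≤ (v - u) * (κp - κm) * (κp + μp) := mul_nonneg h2 (by linarith)
    exact mul_nonneg h3 (by linarith)
  exact mul_nonneg h1 (sq_nonneg t)

set_option maxHeartbeats 1000000 in
lemma hs_mono3 (κm κp μm μp t s u v : ℝ)
    (hκm : 0 < κm) (hκ : κm < κp) (hμm : 0 < μm) (hμ : μm < μp)
    (hts : t ^ 2 + s ^ 2 = 1)
    (hu0 : 0 ≤ u) (huv : u ≤ v) (hv1 : v ≤ 1) :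
    (κm + u * (κp - κm)) * t ^ 2 + (μm + u * (μp - μm)) * (1 - t ^ 2)
      - (1 - u) * (u * (μp - μm) ^ 2 * s ^ 2 / (κp + μp - (μp - μm) * u)
          - (κp - κm) * t ^ 2)
    ≤ (κm + v * (κp - κm)) * t ^ 2 + (μm + v * (μp - μm)) * (1 - t ^ 2)
      - (1 - v) * (v * (μp - μm) ^ 2 * s ^ 2 / (κp + μp - (μp - μm) * v)
          - (κp - κm) * t ^ 2) := by
  have hv0 : 0 ≤ v := hu0.trans huv
  have hu1 : u ≤ 1 := huv.trans hv1
  have h1t : 1 - t ^ 2 = s ^ 2 := by linarith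
  have hdu : 0 < κp + μp - (μp - μm) * u := by nlinarith
  have hdv : 0 < κp + μp - (μp - μm) * v := by nlinarith
  rw [h1t, ← sub_nonneg]
  have key : ((κm + v * (κp - κm)) * t ^ 2 + (μm + v * (μp - μm)) * s ^ 2
      - (1 - v) * (v * (μp - μm) ^ 2 * s ^ 2 / (κp + μp - (μp - μm) * v)
          - (κp - κm) * t ^ 2))
    - ((κm + u * (κp - κm)) * t ^ 2 + (μm + u * (μp - μm)) * s ^ 2
      - (1 - u) * (u * (μp - μm) ^ 2 * s ^ 2 / (κp + μp - (μp - μm) * u)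
          - (κp - κm) * t ^ 2))
    = (v - u) * (μp - μm) * (κp + μp) * (μm + κp) * s ^ 2
        / ((κp + μp - (μp - μm) * u) * (κp + μp - (μp - μm) * v)) := by
    set A := κp + μp - (μp - μm) * u with hA
    set B := κp + μp - (μp - μm) * v with hB
    field_simp [hdu.ne', hdv.ne']
    rw [hA, hB]
    ring
  rw [key]
  apply div_nonneg _ (mul_pos hdu hdv).le
  have h1 : 0 ≤ (v - u) * (μp - μm) * (κp + μp) * (μm + κp) := by
    have : 0 ≤ v - u := sub_nonneg.mpr huv
    have h2 : 0 ≤ (v - u) * (μp - μm) := mul_nonneg this (by linarith)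
    have h3 : 0 ≤ (v - u) * (μp - μm) * (κp + μp) := mul_nonneg h2 (by linarith)
    exact mul_nonneg h3 (by linarith)
  exact mul_nonneg h1 (sq_nonneg s)

set_option maxHeartbeats 1000000 in
lemma hs_cmp12 (κm κp μm μp t s u : ℝ)
    (hκm : 0 < κm) (hκ : κm < κp) (hμm : 0 < μm) (hμ : μm < μp)
    (hu0 : 0 ≤ u) (hu1 : u ≤ 1) :
    (κm + u * (κp - κm)) * t ^ 2 + (μm + u * (μp - μm)) * (1 - t ^ 2)
      - u * (1 - u) * ((κp - κm) * t - (μp - μm) * s) ^ 2 /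
          (κp + μp - ((κp - κm) + (μp - μm)) * u)
    ≤ (κm + u * (κp - κm)) * t ^ 2 + (μm + u * (μp - μm)) * (1 - t ^ 2)
      - (1 - u) * (u * (κp - κm) ^ 2 * t ^ 2 / (κp + μp - (κp - κm) * u)
          - (μp - μm) * s ^ 2) := by
  have hd1 : 0 < κp + μp - ((κp - κm) + (μp - μm)) * u := by nlinarith
  have hd2 : 0 < κp + μp - (κp - κm) * u := by nlinarith
  rw [← sub_nonneg]
  have key : ((κm + u * (κp - κm)) * t ^ 2 + (μm + u * (μp - μm)) * (1 - t ^ 2)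
      - (1 - u) * (u * (κp - κm) ^ 2 * t ^ 2 / (κp + μp - (κp - κm) * u)
          - (μp - μm) * s ^ 2))
    - ((κm + u * (κp - κm)) * t ^ 2 + (μm + u * (μp - μm)) * (1 - t ^ 2)
      - u * (1 - u) * ((κp - κm) * t - (μp - μm) * s) ^ 2 /
          (κp + μp - ((κp - κm) + (μp - μm)) * u))
    = (1 - u) * (μp - μm)
        * (s * (κp + μp - (κp - κm) * u) - (κp - κm) * t * u) ^ 2
        / ((κp + μp - ((κp - κm) + (μp - μm)) * u) * (κp + μp - (κp - κm) * u)) := by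
    set A := κp + μp - ((κp - κm) + (μp - μm)) * u with hA
    set B := κp + μp - (κp - κm) * u with hB
    field_simp [hd1.ne', hd2.ne']
    rw [hA, hB]
    ring
  rw [key]
  apply div_nonneg _ (mul_pos hd1 hd2).le
  exact mul_nonneg (mul_nonneg (by linarith) (by linarith)) (sq_nonneg _)

set_option maxHeartbeats 1000000 in
lemma hs_cmp13 (κm κp μm μp t s u : ℝ)
    (hκm : 0 < κm) (hκ : κm < κp) (hμm : 0 < μm) (hμ : μm < μp)
    (hu0 : 0 ≤ u) (hu1 : u ≤ 1) :
    (κm + u * (κp - κm)) * t ^ 2 + (μm + u * (μp - μm)) * (1 - t ^ 2)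
      - u * (1 - u) * ((κp - κm) * t - (μp - μm) * s) ^ 2 /
          (κp + μp - ((κp - κm) + (μp - μm)) * u)
    ≤ (κm + u * (κp - κm)) * t ^ 2 + (μm + u * (μp - μm)) * (1 - t ^ 2)
      - (1 - u) * (u * (μp - μm) ^ 2 * s ^ 2 / (κp + μp - (μp - μm) * u)
          - (κp - κm) * t ^ 2) := by
  have hd1 : 0 < κp + μp - ((κp - κm) + (μp - μm)) * u := by nlinarith
  have hd3 : 0 < κp + μp - (μp - μm) * u := by nlinarith
  rw [← sub_nonneg]
  have key : ((κm + u * (κp - κm)) * t ^ 2 + (μm + u * (μp - μm)) * (1 - t ^ 2)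
      - (1 - u) * (u * (μp - μm) ^ 2 * s ^ 2 / (κp + μp - (μp - μm) * u)
          - (κp - κm) * t ^ 2))
    - ((κm + u * (κp - κm)) * t ^ 2 + (μm + u * (μp - μm)) * (1 - t ^ 2)
      - u * (1 - u) * ((κp - κm) * t - (μp - μm) * s) ^ 2 /
          (κp + μp - ((κp - κm) + (μp - μm)) * u))
    = (1 - u) * (κp - κm)
        * (t * (κp + μp - (μp - μm) * u) - (μp - μm) * s * u) ^ 2
        / ((κp + μp - ((κp - κm) + (μp - μm)) * u) * (κp + μp - (μp - μm) * u)) := by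
    set A := κp + μp - ((κp - κm) + (μp - μm)) * u with hA
    set B := κp + μp - (μp - μm) * u with hB
    field_simp [hd1.ne', hd3.ne']
    rw [hA, hB]
    ring
  rw [key]
  apply div_nonneg _ (mul_pos hd1 hd3).le
  exact mul_nonneg (mul_nonneg (by linarith) (by linarith)) (sq_nonneg _)

/-- For each fixed `t ∈ [0,1]`, the Hashin–Shtrikman upper-bound function
`v ↦ f^HS(t;v)` is nondecreasing on `[0,1]`. -/
theorem hs_upper_bound_monotoneOn
    (κm κp μm μp : ℝ) (hκm : 0 < κm) (hκ : κm < κp) (hμm : 0 < μm) (hμ : μm < μp)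
    (t : ℝ) (ht : t ∈ Set.Icc (0 : ℝ) 1) :
    MonotoneOn (fun v => fHS κm κp μm μp t v) (Set.Icc (0 : ℝ) 1) := by
  obtain ⟨ht0, ht1⟩ := ht
  have hs0 : 0 ≤ sHS t := Real.sqrt_nonneg _
  have hs2 : sHS t ^ 2 = 1 - t ^ 2 := Real.sq_sqrt (by nlinarith)
  have hts : t ^ 2 + sHS t ^ 2 = 1 := by rw [hs2]; ring
  intro u hu v hv huv
  obtain ⟨hu0, hu1⟩ := hu
  obtain ⟨hv0, hv1⟩ := hv
  show fHS κm κp μm μp t u ≤ fHS κm κp μm μp t v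
  -- region 2 and region 3 are upward closed, and disjoint
  have up2 : (κp + μp - (κp - κm) * u) * sHS t < u * (κp - κm) * t →
      (κp + μp - (κp - κm) * v) * sHS t < v * (κp - κm) * t := by
    intro h
    nlinarith [mul_nonneg (mul_nonneg (sub_nonneg.mpr huv) (by linarith : (0:ℝ) ≤ κp - κm))
      (add_nonneg ht0 hs0)]
  have up3 : (κp + μp - (μp - μm) * u) * t < u * (μp - μm) * sHS t →
      (κp + μp - (μp - μm) * v) * t < v * (μp - μm) * sHS t := by
    intro h
    nlinarith [mul_nonneg (mul_nonneg (sub_nonneg.mpr huv) (by linarith : (0:ℝ) ≤ μp - μm))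
      (add_nonneg ht0 hs0)]
  have hts1 : 1 ≤ t + sHS t := by
    have h1 : (1 - t - sHS t) * (1 + t + sHS t) ≤ 0 := by
      nlinarith [mul_nonneg ht0 hs0]
    nlinarith [h1]
  have disj : ¬ ((κp + μp - (κp - κm) * v) * sHS t < v * (κp - κm) * t ∧
      (κp + μp - (μp - μm) * v) * t < v * (μp - μm) * sHS t) := by
    rintro ⟨h2, h3⟩
    nlinarith [mul_nonneg (mul_nonneg (sub_nonneg.mpr hv1)
        (by linarith : (0:ℝ) ≤ (κp - κm) + (μp - μm))) (add_nonneg ht0 hs0),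
      mul_le_mul_of_nonneg_left hts1 (by linarith : (0:ℝ) ≤ κm + μm)]
  by_cases h2v : (κp + μp - (κp - κm) * v) * sHS t < v * (κp - κm) * t
  · -- v in region 2
    rw [fHS_eq2 κm κp μm μp t v h2v]
    by_cases h2u : (κp + μp - (κp - κm) * u) * sHS t < u * (κp - κm) * t
    · rw [fHS_eq2 κm κp μm μp t u h2u]
      exact hs_mono2 κm κp μm μp t (sHS t) u v hκm hκ hμm hμ hts hu0 huv hv1
    · by_cases h3u : u * (μp - μm) * sHS t ≤ (κp + μp - (μp - μm) * u) * t
      · rw [fHS_eq1 κm κp μm μp t u ⟨not_lt.mp h2u, h3u⟩]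
        calc _ ≤ _ := hs_cmp12 κm κp μm μp t (sHS t) u hκm hκ hμm hμ hu0 hu1
          _ ≤ _ := hs_mono2 κm κp μm μp t (sHS t) u v hκm hκ hμm hμ hts hu0 huv hv1
      · exact absurd ⟨h2v, up3 (not_le.mp h3u)⟩ disj
  · by_cases h3v : v * (μp - μm) * sHS t ≤ (κp + μp - (μp - μm) * v) * t
    · -- v in region 1, hence u in region 1
      have h2u : ¬ ((κp + μp - (κp - κm) * u) * sHS t < u * (κp - κm) * t) :=
        fun h => h2v (up2 h)
      have h3u : u * (μp - μm) * sHS t ≤ (κp + μp - (μp - μm) * u) * t := by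
        by_contra hc
        exact not_lt.mpr h3v (up3 (not_le.mp hc))
      rw [fHS_eq1 κm κp μm μp t u ⟨not_lt.mp h2u, h3u⟩,
        fHS_eq1 κm κp μm μp t v ⟨not_lt.mp h2v, h3v⟩]
      exact hs_mono1 κm κp μm μp t (sHS t) u v hκm hκ hμm hμ ht0 hs0 hts hu0 huv hv1
    · -- v in region 3
      rw [fHS_eq3 κm κp μm μp t v h2v h3v]
      have h2u : ¬ ((κp + μp - (κp - κm) * u) * sHS t < u * (κp - κm) * t) :=
        fun h => h2v (up2 h)
      by_cases h3u : u * (μp - μm) * sHS t ≤ (κp + μp - (μp - μm) * u) * t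
      · rw [fHS_eq1 κm κp μm μp t u ⟨not_lt.mp h2u, h3u⟩]
        calc _ ≤ _ := hs_cmp13 κm κp μm μp t (sHS t) u hκm hκ hμm hμ hu0 hu1
          _ ≤ _ := hs_mono3 κm κp μm μp t (sHS t) u v hκm hκ hμm hμ hts hu0 huv hv1
      · rw [fHS_eq3 κm κp μm μp t u h2u h3u]
        exact hs_mono3 κm κp μm μp t (sHS t) u v hκm hκ hμm hμ hts hu0 huv hv1
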